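/- arXiv:1905.08592 — 7 statements merged into one kernel-verified Lean document; each statement's English description precedes it below -/
import Mathlib

section
/- Let X be a set of jobs on machine i, T > 0, B = {j ∈ X : p̂_{ij} > T/Γ}, and define modified processing times p_{ij} = p̄_{ij} + p̂_{ij} for j ∈ B and p_{ij} = p̄_{ij} otherwise. If the worst-case robust load of X is at most T, then ∑_{j∈X} p_{ij} ≤ T. -/
/-- With `B = {j ∈ X : p̂_j > T/Γ}` and modified processing times
`p_j = p̄_j + p̂_j` for `j ∈ B` and `p_j = p̄_j` otherwise, if the robust load
`p̄(X) + p̂_Γ(X)` of `X` is at most `T` then `∑_{j∈X} p_j ≤ T`. -/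
theorem stmt3 {J : Type*} [DecidableEq J]
    (pbar phat : J → ℝ) (hpbar : ∀ j, 0 ≤ pbar j) (hphat : ∀ j, 0 ≤ phat j)
    (Γ : ℕ) (hΓ : 1 ≤ Γ) (T : ℝ) (hT : 0 < T)
    (X G : Finset J) (hGX : G ⊆ X) (hcard : G.card = min Γ X.card)
    (htop : ∀ j ∈ G, ∀ k ∈ X \ G, phat k ≤ phat j)
    (hload : ∑ j ∈ X, pbar j + ∑ j ∈ G, phat j ≤ T) :
    ∑ j ∈ X, (if T / (Γ : ℝ) < phat j then pbar j + phat j else pbar j) ≤ T := by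
  have hΓpos : (0:ℝ) < (Γ:ℝ) := by exact_mod_cast hΓ
  have key : ∀ j ∈ X, (if T / (Γ : ℝ) < phat j then pbar j + phat j else pbar j)
      = pbar j + (if T / (Γ : ℝ) < phat j then phat j else 0) := by
    intro j _; split <;> simp
  rw [Finset.sum_congr rfl key, Finset.sum_add_distrib]
  have hBsub : X.filter (fun j => T / (Γ:ℝ) < phat j) ⊆ G := by
    intro j hj
    simp only [Finset.mem_filter] at hj
    by_contra hjG
    have hjXG : j ∈ X \ G := Finset.mem_sdiff.mpr ⟨hj.1, hjG⟩
    have hlt : G.card < X.card :=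
      Finset.card_lt_card ((Finset.ssubset_iff_of_subset hGX).mpr ⟨j, hj.1, hjG⟩)
    have hGΓ : G.card = Γ := by omega
    have hsum : (Γ:ℝ) * phat j ≤ ∑ k ∈ G, phat k := by
      calc (Γ:ℝ) * phat j = ∑ _k ∈ G, phat j := by
            rw [Finset.sum_const, hGΓ, nsmul_eq_mul]
        _ ≤ ∑ k ∈ G, phat k := Finset.sum_le_sum (fun k hk => htop k hk j hjXG)
    have hT' : T < (Γ:ℝ) * phat j := by
      calc T = (Γ:ℝ) * (T / Γ) := by field_simp
        _ < (Γ:ℝ) * phat j := mul_lt_mul_of_pos_left hj.2 hΓpos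
    have hpb : 0 ≤ ∑ j ∈ X, pbar j := Finset.sum_nonneg fun j _ => hpbar j
    linarith
  have h2 : ∑ j ∈ X, (if T / (Γ:ℝ) < phat j then phat j else 0) ≤ ∑ j ∈ G, phat j := by
    rw [← Finset.sum_filter]
    exact Finset.sum_le_sum_of_subset_of_nonneg hBsub (fun k _ _ => hphat k)
  linarith
end

section
/- Let X be a set of jobs on machine i, T > 0, B = {j ∈ X : p̂_{ij} > T/Γ}, and define p_{ij} = p̄_{ij} + p̂_{ij} for j ∈ B and p_{ij} = p̄_{ij} otherwise. Then the worst-case robust load of X satisfies p̄(X) + p̂_Γ(X) ≤ ∑_{j∈X} p_{ij} + T. -/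
/-- With `B = {j ∈ X : p̂_j > T/Γ}` and modified processing times
`p_j = p̄_j + p̂_j` for `j ∈ B` and `p_j = p̄_j` otherwise, the robust load satisfies
`p̄(X) + p̂_Γ(X) ≤ ∑_{j∈X} p_j + T`. -/
theorem stmt4 {J : Type*} [DecidableEq J]
    (pbar phat : J → ℝ) (hpbar : ∀ j, 0 ≤ pbar j) (hphat : ∀ j, 0 ≤ phat j)
    (Γ : ℕ) (hΓ : 1 ≤ Γ) (T : ℝ) (hT : 0 < T)
    (X G : Finset J) (hGX : G ⊆ X) (hcard : G.card = min Γ X.card)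
    (htop : ∀ j ∈ G, ∀ k ∈ X \ G, phat k ≤ phat j) :
    ∑ j ∈ X, pbar j + ∑ j ∈ G, phat j ≤
      (∑ j ∈ X, (if T / (Γ : ℝ) < phat j then pbar j + phat j else pbar j)) + T := by
  classical
  set B := X.filter (fun j => T / (Γ : ℝ) < phat j) with hB
  have hsplit : ∑ j ∈ X, (if T / (Γ : ℝ) < phat j then pbar j + phat j else pbar j)
      = ∑ j ∈ X, pbar j + ∑ j ∈ B, phat j := by
    rw [hB, Finset.sum_filter, ← Finset.sum_add_distrib]
    apply Finset.sum_congr rfl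
    intro j _
    split <;> ring
  rw [hsplit]
  have h1 : ∑ j ∈ G, phat j = ∑ j ∈ G ∩ B, phat j + ∑ j ∈ G \ B, phat j :=
    (Finset.sum_inter_add_sum_sdiff G B phat).symm
  have h2 : ∑ j ∈ G ∩ B, phat j ≤ ∑ j ∈ B, phat j :=
    Finset.sum_le_sum_of_subset_of_nonneg Finset.inter_subset_right (fun j _ _ => hphat j)
  have hΓpos : (0:ℝ) < (Γ : ℝ) := by exact_mod_cast hΓ
  have hGΓ : G.card ≤ Γ := hcard ▸ min_le_left _ _
  have h3 : ∑ j ∈ G \ B, phat j ≤ T := by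
    calc ∑ j ∈ G \ B, phat j ≤ ∑ _j ∈ G \ B, T / (Γ : ℝ) := by
          apply Finset.sum_le_sum
          intro j hj
          have hjG := (Finset.mem_sdiff.mp hj).1
          have hjB := (Finset.mem_sdiff.mp hj).2
          have hnot : ¬ (T / (Γ : ℝ) < phat j) := fun h =>
            hjB (by rw [hB]; exact Finset.mem_filter.mpr ⟨hGX hjG, h⟩)
          linarith [not_lt.mp hnot]
      _ = ((G \ B).card : ℝ) * (T / (Γ : ℝ)) := by
          rw [Finset.sum_const, nsmul_eq_mul]
      _ ≤ (Γ : ℝ) * (T / (Γ : ℝ)) := by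
          apply mul_le_mul_of_nonneg_right
          · exact_mod_cast le_trans (Finset.card_le_card Finset.sdiff_subset) hGΓ
          · positivity
      _ = T := by field_simp
  linarith
end

section
/- Any polynomial-time c-approximation algorithm for makespan minimization on unrelated machines yields, via the threshold transformation (adding deviations to nominal times exactly for jobs with p̂_{ij} > T/Γ) combined with binary search, a (c+1)-approximation for robust makespan minimization under budgeted uncertainty. Formally: if T ≥ OPT of the robust instance, then the transformed classical instance has optimum at most T, and any schedule of classical makespan at most cT has robust makespan at most (c+1)T. -/
/-- Sum of the `Γ` largest deviations of jobs in `X` (all of them if `|X| ≤ Γ`),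
expressed as the maximum of `∑_{j∈S} p̂_j` over subsets `S ⊆ X` with `|S| ≤ Γ`. -/
noncomputable def devGamma {J : Type*} (phat : J → ℝ) (Γ : ℕ) (X : Finset J) : ℝ :=
  (X.powerset.filter (fun S => S.card ≤ Γ)).sup'
    ⟨∅, by simp⟩ (fun S => ∑ j ∈ S, phat j)

lemma devGamma_le {J : Type*} (phat : J → ℝ) (Γ : ℕ) (X : Finset J) (b : ℝ)
    (h : ∀ S ⊆ X, S.card ≤ Γ → ∑ j ∈ S, phat j ≤ b) : devGamma phat Γ X ≤ b := by
  apply Finset.sup'_le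
  intro S hS
  simp only [Finset.mem_filter, Finset.mem_powerset] at hS
  exact h S hS.1 hS.2

lemma le_devGamma {J : Type*} (phat : J → ℝ) (Γ : ℕ) (X S : Finset J)
    (hS : S ⊆ X) (hcard : S.card ≤ Γ) : ∑ j ∈ S, phat j ≤ devGamma phat Γ X := by
  unfold devGamma
  apply Finset.le_sup' (fun S => ∑ j ∈ S, phat j)
  simp only [Finset.mem_filter, Finset.mem_powerset]
  exact ⟨hS, hcard⟩

/-- Threshold transformation: set `p_{ij} = p̄_{ij} + p̂_{ij}` when
`p̂_{ij} > T/Γ` and `p_{ij} = p̄_{ij}` otherwise.  If `T ≥ OPT` of the robust instance,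
the transformed classical instance has optimum at most `T`; and any schedule of classical
makespan at most `c·T` has robust makespan at most `(c+1)·T`.  (Hence a polynomial
`c`-approximation for `R||C_max` gives a `(c+1)`-approximation for `R|U^Γ|C_max`.) -/
theorem stmt5 {J M : Type*} [DecidableEq J] [Fintype J] [Fintype M] [DecidableEq M]
    [Nonempty M]
    (pbar phat : M → J → ℝ)
    (hpbar : ∀ i j, 0 ≤ pbar i j) (hphat : ∀ i j, 0 ≤ phat i j)
    (Γ : ℕ) (hΓ : 1 ≤ Γ) (T c : ℝ) (hT : 0 < T) (hc : 1 ≤ c) :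
    let p : M → J → ℝ := fun i j =>
      if T / (Γ : ℝ) < phat i j then pbar i j + phat i j else pbar i j
    let jobs : (J → M) → M → Finset J := fun σ i => Finset.univ.filter (fun j => σ j = i)
    let robustMakespan : (J → M) → ℝ := fun σ =>
      Finset.univ.sup' Finset.univ_nonempty
        (fun i => ∑ j ∈ jobs σ i, pbar i j + devGamma (phat i) Γ (jobs σ i))
    let classicalMakespan : (J → M) → ℝ := fun σ =>
      Finset.univ.sup' Finset.univ_nonempty (fun i => ∑ j ∈ jobs σ i, p i j)
    ((∃ σ, robustMakespan σ ≤ T) → (∃ σ, classicalMakespan σ ≤ T)) ∧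
    (∀ σ, classicalMakespan σ ≤ c * T → robustMakespan σ ≤ (c + 1) * T) := by
  intro p jobs robustMakespan classicalMakespan
  have hΓR : (0:ℝ) < (Γ : ℝ) := by exact_mod_cast hΓ
  -- split of classical sum
  have hsplit : ∀ (σ : J → M) (i : M),
      ∑ j ∈ jobs σ i, p i j
        = ∑ j ∈ jobs σ i, pbar i j
          + ∑ j ∈ (jobs σ i).filter (fun j => T / (Γ:ℝ) < phat i j), phat i j := by
    intro σ i
    have hcong : ∀ j ∈ jobs σ i, p i j
        = pbar i j + (if T / (Γ:ℝ) < phat i j then phat i j else 0) := by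
      intro j _
      show (if T / (Γ:ℝ) < phat i j then pbar i j + phat i j else pbar i j) = _
      split <;> simp
    rw [Finset.sum_congr rfl hcong, Finset.sum_add_distrib, ← Finset.sum_filter]
  constructor
  · rintro ⟨σ, hσ⟩
    refine ⟨σ, ?_⟩
    show Finset.univ.sup' Finset.univ_nonempty (fun i => ∑ j ∈ jobs σ i, p i j) ≤ T
    apply Finset.sup'_le
    intro i _
    set X := jobs σ i with hX
    set B := X.filter (fun j => T / (Γ:ℝ) < phat i j) with hB
    have hσ' : Finset.univ.sup' Finset.univ_nonempty
        (fun i => ∑ j ∈ jobs σ i, pbar i j + devGamma (phat i) Γ (jobs σ i)) ≤ T := hσ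
    have hrob_i : ∑ j ∈ X, pbar i j + devGamma (phat i) Γ X ≤ T :=
      le_trans (Finset.le_sup'
        (fun i => ∑ j ∈ jobs σ i, pbar i j + devGamma (phat i) Γ (jobs σ i))
        (Finset.mem_univ i)) hσ'
    have hpbarsum : 0 ≤ ∑ j ∈ X, pbar i j :=
      Finset.sum_nonneg fun j _ => hpbar i j
    -- B has at most Γ elements
    have hBcard : B.card ≤ Γ := by
      by_contra hgt
      push_neg at hgt
      obtain ⟨S, hSB, hScard⟩ := Finset.exists_subset_card_eq (le_of_lt hgt)
      have hSsub : S ⊆ X := hSB.trans (Finset.filter_subset _ _)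
      have hSlt : T < ∑ j ∈ S, phat i j := by
        have hne : S.Nonempty := by
          rw [← Finset.card_pos, hScard]; omega
        have := Finset.sum_lt_sum_of_nonempty hne
          (f := fun _ => T / (Γ:ℝ)) (g := fun j => phat i j)
          (fun j hj => by
            have := hSB hj
            rw [hB, Finset.mem_filter] at this
            exact this.2)
        calc T = ∑ _j ∈ S, T / (Γ:ℝ) := by
                rw [Finset.sum_const, hScard, nsmul_eq_mul]
                field_simp
          _ < ∑ j ∈ S, phat i j := this
      have hle : ∑ j ∈ S, phat i j ≤ devGamma (phat i) Γ X :=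
        le_devGamma _ _ _ _ hSsub (le_of_eq hScard)
      linarith
    have hBle : ∑ j ∈ B, phat i j ≤ devGamma (phat i) Γ X :=
      le_devGamma _ _ _ _ (Finset.filter_subset _ _) hBcard
    calc ∑ j ∈ X, p i j = ∑ j ∈ X, pbar i j + ∑ j ∈ B, phat i j := hsplit σ i
      _ ≤ ∑ j ∈ X, pbar i j + devGamma (phat i) Γ X := by linarith
      _ ≤ T := hrob_i
  · intro σ hσ
    have hσ' : Finset.univ.sup' Finset.univ_nonempty
        (fun i => ∑ j ∈ jobs σ i, p i j) ≤ c * T := hσ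
    show Finset.univ.sup' Finset.univ_nonempty
        (fun i => ∑ j ∈ jobs σ i, pbar i j + devGamma (phat i) Γ (jobs σ i)) ≤ (c + 1) * T
    apply Finset.sup'_le
    intro i _
    set X := jobs σ i with hX
    set B := X.filter (fun j => T / (Γ:ℝ) < phat i j) with hB
    have hcl_i : ∑ j ∈ X, pbar i j + ∑ j ∈ B, phat i j ≤ c * T := by
      rw [← hsplit σ i]
      exact le_trans (Finset.le_sup' (fun i => ∑ j ∈ jobs σ i, p i j)
        (Finset.mem_univ i)) hσ'
    have hdev : devGamma (phat i) Γ X ≤ ∑ j ∈ B, phat i j + T := by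
      apply devGamma_le
      intro S hSX hScard
      have hsplitS : ∑ j ∈ S, phat i j
          = ∑ j ∈ S.filter (fun j => T / (Γ:ℝ) < phat i j), phat i j
            + ∑ j ∈ S.filter (fun j => ¬ T / (Γ:ℝ) < phat i j), phat i j :=
        (Finset.sum_filter_add_sum_filter_not S _ _).symm
      have h1 : ∑ j ∈ S.filter (fun j => T / (Γ:ℝ) < phat i j), phat i j
          ≤ ∑ j ∈ B, phat i j := by
        apply Finset.sum_le_sum_of_subset_of_nonneg
        · rw [hB]
          exact Finset.filter_subset_filter _ hSX
        · intro j _ _; exact hphat i j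
      have h2 : ∑ j ∈ S.filter (fun j => ¬ T / (Γ:ℝ) < phat i j), phat i j ≤ T := by
        calc ∑ j ∈ S.filter (fun j => ¬ T / (Γ:ℝ) < phat i j), phat i j
            ≤ ∑ _j ∈ S.filter (fun j => ¬ T / (Γ:ℝ) < phat i j), T / (Γ:ℝ) := by
              apply Finset.sum_le_sum
              intro j hj
              rw [Finset.mem_filter] at hj
              exact le_of_not_gt hj.2
          _ = (S.filter (fun j => ¬ T / (Γ:ℝ) < phat i j)).card * (T / (Γ:ℝ)) := by
              rw [Finset.sum_const, nsmul_eq_mul]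
          _ ≤ (Γ:ℝ) * (T / (Γ:ℝ)) := by
              apply mul_le_mul_of_nonneg_right
              · exact_mod_cast le_trans (Finset.card_filter_le _ _) hScard
              · positivity
          _ = T := by field_simp
      linarith
    have hpos : 0 ≤ T := le_of_lt hT
    calc ∑ j ∈ X, pbar i j + devGamma (phat i) Γ X
        ≤ ∑ j ∈ X, pbar i j + (∑ j ∈ B, phat i j + T) := by linarith
      _ ≤ c * T + T := by linarith
      _ = (c + 1) * T := by ring
end

section
/- In the reduction from 3-SAT, the 3-SAT instance is satisfiable if and only if the constructed robust scheduling instance with Γ=1 has optimum robust makespan equal to 1 (and if unsatisfiable, the optimum is at least 2). -/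
open scoped ENNReal

/-- Reduction from 3-SAT with `Γ = 1`.  Machines are pairs `(v, b)` (two per
variable), jobs are variables plus clauses.  Variable job `v` has nominal time `1` on its
two machines and `∞` elsewhere, zero deviation.  The clause job for clause `c` has nominal
time `0`, deviation `1` on the three machines corresponding to the literals of `c`, and
`∞` elsewhere.  With `Γ = 1` the robust load of a machine is the sum of nominal times plus
the largest deviation on it.  The 3-SAT instance is satisfiable iff the optimum robust
makespan equals `1`; if it is unsatisfiable the optimum is at least `2`. -/
theorem stmt6 (n₀ m₀ : ℕ) (hn : 0 < n₀)
    (clauses : Fin m₀ → Fin 3 → Fin n₀ × Bool) :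
    let pbar : Fin n₀ × Bool → (Fin n₀ ⊕ Fin m₀) → ℝ≥0∞ := fun i j =>
      Sum.casesOn j (fun v => if i.1 = v then 1 else ⊤) (fun _ => 0)
    let phat : Fin n₀ × Bool → (Fin n₀ ⊕ Fin m₀) → ℝ≥0∞ := fun i j =>
      Sum.casesOn j (fun _ => 0) (fun c => if ∃ k, clauses c k = i then 1 else ⊤)
    let jobs : ((Fin n₀ ⊕ Fin m₀) → Fin n₀ × Bool) → Fin n₀ × Bool →
        Finset (Fin n₀ ⊕ Fin m₀) := fun σ i => Finset.univ.filter (fun j => σ j = i)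
    let makespan : ((Fin n₀ ⊕ Fin m₀) → Fin n₀ × Bool) → ℝ≥0∞ := fun σ =>
      Finset.univ.sup (fun i => ∑ j ∈ jobs σ i, pbar i j + (jobs σ i).sup (phat i))
    let opt : ℝ≥0∞ := ⨅ σ, makespan σ
    let satisfiable : Prop :=
      ∃ a : Fin n₀ → Bool, ∀ c, ∃ k, a (clauses c k).1 = (clauses c k).2
    (satisfiable ↔ opt = 1) ∧ (¬ satisfiable → 2 ≤ opt) := by
  intro pbar phat jobs makespan opt satisfiable
  have pbar_inl : ∀ i v, pbar i (Sum.inl v) = if i.1 = v then 1 else ⊤ := fun _ _ => rfl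
  have pbar_inr : ∀ i c, pbar i (Sum.inr c) = 0 := fun _ _ => rfl
  have phat_inl : ∀ i v, phat i (Sum.inl v) = 0 := fun _ _ => rfl
  have phat_inr : ∀ i c, phat i (Sum.inr c) = if ∃ k, clauses c k = i then 1 else ⊤ :=
    fun _ _ => rfl
  have jobs_def : ∀ σ i j, j ∈ jobs σ i ↔ σ j = i := by
    intro σ i j
    show j ∈ Finset.univ.filter (fun j => σ j = i) ↔ _
    simp
  have ms_le : ∀ σ i,
      (∑ j ∈ jobs σ i, pbar i j + (jobs σ i).sup (phat i)) ≤ makespan σ :=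
    fun σ i => Finset.le_sup (f := fun i => ∑ j ∈ jobs σ i, pbar i j + (jobs σ i).sup (phat i))
      (Finset.mem_univ i)
  -- every schedule has makespan at least 1
  have hlb : ∀ σ, (1 : ℝ≥0∞) ≤ makespan σ := by
    intro σ
    set v0 : Fin n₀ := ⟨0, hn⟩ with hv0
    set i := σ (Sum.inl v0) with hi
    have h1 : (1 : ℝ≥0∞) ≤ pbar i (Sum.inl v0) := by
      rw [pbar_inl]; split <;> simp
    have h2 : pbar i (Sum.inl v0) ≤ ∑ j ∈ jobs σ i, pbar i j :=
      Finset.single_le_sum (fun j _ => zero_le) ((jobs_def σ i _).2 hi.symm)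
    calc (1 : ℝ≥0∞) ≤ ∑ j ∈ jobs σ i, pbar i j := h1.trans h2
      _ ≤ ∑ j ∈ jobs σ i, pbar i j + (jobs σ i).sup (phat i) := le_self_add
      _ ≤ makespan σ := ms_le σ i
  -- satisfiable → opt = 1
  have hsat : satisfiable → opt = 1 := by
    intro hs
    obtain ⟨a, ha⟩ := (hs : ∃ a : Fin n₀ → Bool, ∀ c, ∃ k, a (clauses c k).1 = (clauses c k).2)
    choose k hk using ha
    set σ : (Fin n₀ ⊕ Fin m₀) → Fin n₀ × Bool :=
      fun j => Sum.casesOn j (fun v => (v, !(a v))) (fun c => clauses c (k c)) with hσ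
    have hub : makespan σ ≤ 1 := by
      apply Finset.sup_le
      intro i _
      have hsum : ∑ j ∈ jobs σ i, pbar i j ≤ 1 := by
        calc ∑ j ∈ jobs σ i, pbar i j
            ≤ ∑ j ∈ jobs σ i, (if j = Sum.inl i.1 then (1 : ℝ≥0∞) else 0) := by
              apply Finset.sum_le_sum
              intro j hj
              rw [jobs_def] at hj
              cases j with
              | inl v =>
                have hv : v = i.1 := by rw [← hj]
                rw [pbar_inl i v, if_pos hv.symm, if_pos (by rw [hv])]
              | inr c => rw [pbar_inr i c]; exact zero_le
          _ ≤ ∑ j ∈ (Finset.univ : Finset (Fin n₀ ⊕ Fin m₀)),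
                (if j = Sum.inl i.1 then (1 : ℝ≥0∞) else 0) :=
              Finset.sum_le_sum_of_subset (Finset.subset_univ _)
          _ = 1 := by rw [Finset.sum_ite_eq' Finset.univ (Sum.inl i.1) (fun _ => (1:ℝ≥0∞))]; simp
      by_cases hc : i.2 = a i.1
      · -- clause-side machine: no variable jobs, so sum = 0 and sup ≤ 1
        have hsum0 : ∑ j ∈ jobs σ i, pbar i j = 0 := by
          apply Finset.sum_eq_zero
          intro j hj
          rw [jobs_def] at hj
          cases j with
          | inl v =>
            exfalso
            have h1 : (v, !(a v)) = i := hj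
            rw [Prod.ext_iff] at h1
            obtain ⟨hv, hb⟩ := h1
            simp only [Prod.fst, Prod.snd] at hv hb
            subst hv
            rw [hc] at hb
            exact Bool.not_ne_self _ hb
          | inr c => exact pbar_inr i c
        have hsup : (jobs σ i).sup (phat i) ≤ 1 := by
          apply Finset.sup_le
          intro j hj
          rw [jobs_def] at hj
          cases j with
          | inl v => rw [phat_inl i v]; exact zero_le
          | inr c =>
            have : clauses c (k c) = i := hj
            rw [phat_inr i c, if_pos ⟨k c, this⟩]
        rw [hsum0, zero_add]; exact hsup
      · -- variable-side machine: no clause jobs, so sup = 0 and sum ≤ 1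
        have hsup : (jobs σ i).sup (phat i) ≤ 0 := by
          apply Finset.sup_le
          intro j hj
          rw [jobs_def] at hj
          cases j with
          | inl v => rw [phat_inl i v]
          | inr c =>
            exfalso
            have h1 : clauses c (k c) = i := hj
            have := hk c
            rw [h1] at this
            exact hc this.symm
        calc ∑ j ∈ jobs σ i, pbar i j + (jobs σ i).sup (phat i)
            ≤ 1 + 0 := add_le_add hsum hsup
          _ = 1 := by simp
    exact le_antisymm ((iInf_le _ σ).trans hub) (le_iInf hlb)
  -- unsatisfiable → 2 ≤ opt
  have hunsat : ¬ satisfiable → 2 ≤ opt := by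
    intro hns
    apply le_iInf
    intro σ
    by_contra h2
    push_neg at h2
    -- every variable job is on one of its own machines
    have hA : ∀ v, (σ (Sum.inl v)).1 = v := by
      intro v
      by_contra hv
      have hp : pbar (σ (Sum.inl v)) (Sum.inl v) = ⊤ := by
        rw [pbar_inl (σ (Sum.inl v)) v, if_neg hv]
      have : (2 : ℝ≥0∞) ≤ makespan σ := by
        calc (2 : ℝ≥0∞) ≤ ⊤ := le_top
          _ = pbar (σ (Sum.inl v)) (Sum.inl v) := hp.symm
          _ ≤ ∑ j ∈ jobs σ (σ (Sum.inl v)), pbar (σ (Sum.inl v)) j :=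
              Finset.single_le_sum (fun j _ => zero_le) ((jobs_def σ _ _).2 rfl)
          _ ≤ _ := le_self_add
          _ ≤ makespan σ := ms_le σ _
      exact absurd this (not_le.2 h2)
    -- the induced assignment satisfies every clause
    refine hns ⟨fun v => !(σ (Sum.inl v)).2, fun c => ?_⟩
    set i := σ (Sum.inr c) with hi
    have he : ∃ k, clauses c k = i := by
      by_contra hne
      have hp : phat i (Sum.inr c) = ⊤ := by rw [phat_inr i c, if_neg hne]
      have : (2 : ℝ≥0∞) ≤ makespan σ := by
        calc (2 : ℝ≥0∞) ≤ ⊤ := le_top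
          _ = phat i (Sum.inr c) := hp.symm
          _ ≤ (jobs σ i).sup (phat i) := Finset.le_sup ((jobs_def σ i _).2 hi.symm)
          _ ≤ ∑ j ∈ jobs σ i, pbar i j + (jobs σ i).sup (phat i) := le_add_self
          _ ≤ makespan σ := ms_le σ i
      exact absurd this (not_le.2 h2)
    obtain ⟨kc, hkc⟩ := he
    refine ⟨kc, ?_⟩
    have hb : σ (Sum.inl i.1) ≠ i := by
      intro heq
      have h1 : (1 : ℝ≥0∞) ≤ ∑ j ∈ jobs σ i, pbar i j := by
        have hm : Sum.inl i.1 ∈ jobs σ i := (jobs_def σ i _).2 heq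
        have : pbar i (Sum.inl i.1) = 1 := by rw [pbar_inl i i.1, if_pos rfl]
        calc (1 : ℝ≥0∞) = pbar i (Sum.inl i.1) := this.symm
          _ ≤ _ := Finset.single_le_sum (fun j _ => zero_le) hm
      have h2' : (1 : ℝ≥0∞) ≤ (jobs σ i).sup (phat i) := by
        have hm : Sum.inr c ∈ jobs σ i := (jobs_def σ i _).2 hi.symm
        have : phat i (Sum.inr c) = 1 := by rw [phat_inr i c, if_pos ⟨kc, hkc⟩]
        calc (1 : ℝ≥0∞) = phat i (Sum.inr c) := this.symm
          _ ≤ _ := Finset.le_sup hm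
      have : (2 : ℝ≥0∞) ≤ makespan σ := by
        calc (2 : ℝ≥0∞) = 1 + 1 := by norm_num
          _ ≤ ∑ j ∈ jobs σ i, pbar i j + (jobs σ i).sup (phat i) := add_le_add h1 h2'
          _ ≤ makespan σ := ms_le σ i
      exact absurd this (not_le.2 h2)
    have hne2 : (σ (Sum.inl i.1)).2 ≠ i.2 := fun h => hb (Prod.ext (hA i.1) h)
    rw [hkc]
    show (!(σ (Sum.inl i.1)).2) = i.2
    rw [Bool.eq_not_of_ne hne2, Bool.not_not]
  refine ⟨⟨hsat, fun h => ?_⟩, hunsat⟩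
  by_contra hs
  have := hunsat hs
  rw [h] at this
  exact absurd this (by norm_num)
end

section
/- Rounding each deviation p̂_j down to 0 if p̂_j < ε/Γ and otherwise down to the nearest (ε/Γ)(1+ε)^i yields an instance I¹ such that: (a) any schedule's robust makespan in I¹ is at most its robust makespan in I (so OPT(I) ≤ 1 implies OPT(I¹) ≤ 1), and (b) for any schedule σ, the robust makespan in I is at most (1+ε) times the robust makespan in I¹ plus ε, provided the robust makespan in I is scaled so that the target is 1. -/
/-- Rounding deviations on identical machines: `p̂¹_j = 0` if `p̂_j < ε/Γ`, and
otherwise `p̂¹_j` is `p̂_j` rounded down to the nearest `(ε/Γ)(1+ε)^i` (so `p̂¹_j ≤ p̂_j ≤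
(1+ε)·p̂¹_j` in that case).  Then (a) every schedule's robust makespan in the rounded
instance `I¹` is at most its robust makespan in `I` (so `OPT(I) ≤ 1` implies
`OPT(I¹) ≤ 1`), and (b) every schedule's robust makespan in `I` is at most `(1+ε)` times
its robust makespan in `I¹` plus `ε`. -/
theorem stmt9 {J : Type*} [DecidableEq J] [Fintype J] (m : ℕ) (hm : 0 < m)
    (pbar phat phat1 : J → ℝ)
    (hpbar : ∀ j, 0 ≤ pbar j) (hphat : ∀ j, 0 ≤ phat j)
    (ε : ℝ) (hε0 : 0 < ε) (hε1 : ε < 1) (Γ : ℕ) (hΓ : 1 ≤ Γ)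
    (h0 : ∀ j, 0 ≤ phat1 j)
    (hle : ∀ j, phat1 j ≤ phat j)
    (hsmall : ∀ j, phat j < ε / (Γ : ℝ) → phat1 j = 0)
    (hround : ∀ j, ε / (Γ : ℝ) ≤ phat j →
      (∃ i : ℕ, phat1 j = ε / (Γ : ℝ) * (1 + ε) ^ i) ∧ phat j ≤ (1 + ε) * phat1 j) :
    let jobs : (J → Fin m) → Fin m → Finset J :=
      fun σ i => Finset.univ.filter (fun j => σ j = i)
    let makespan : (J → ℝ) → (J → Fin m) → ℝ := fun q σ =>
      Finset.univ.sup' ⟨⟨0, hm⟩, Finset.mem_univ _⟩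
        (fun i => ∑ j ∈ jobs σ i, pbar j + devGamma q Γ (jobs σ i))
    (∀ σ, makespan phat1 σ ≤ makespan phat σ) ∧
    (∀ σ, makespan phat σ ≤ (1 + ε) * makespan phat1 σ + ε) := by
  intro jobs makespan
  have hΓpos : (0:ℝ) < (Γ:ℝ) := by exact_mod_cast hΓ
  have hdev_le : ∀ X : Finset J, devGamma phat1 Γ X ≤ devGamma phat Γ X := by
    intro X
    apply Finset.sup'_le
    intro S hS
    exact Finset.le_sup'_of_le _ hS (Finset.sum_le_sum fun j _ => hle j)
  have hdev0 : ∀ X : Finset J, 0 ≤ devGamma phat1 Γ X := by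
    intro X
    have : (∅ : Finset J) ∈ X.powerset.filter (fun S => S.card ≤ Γ) := by simp
    have h := Finset.le_sup' (fun S => ∑ j ∈ S, phat1 j) this
    simp only [Finset.sum_empty] at h
    exact h
  have hdev_ub : ∀ X : Finset J, devGamma phat Γ X ≤ (1+ε) * devGamma phat1 Γ X + ε := by
    intro X
    apply Finset.sup'_le
    intro S hS
    have hS' := hS
    simp only [Finset.mem_filter, Finset.mem_powerset] at hS'
    have h1 : ∑ j ∈ S, phat j ≤ ∑ j ∈ S, ((1+ε) * phat1 j + ε / (Γ:ℝ)) := by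
      apply Finset.sum_le_sum
      intro j _
      rcases lt_or_ge (phat j) (ε / (Γ:ℝ)) with h | h
      · have hz := hsmall j h
        rw [hz]
        linarith
      · have h2 := (hround j h).2
        have hεΓ : 0 ≤ ε / (Γ:ℝ) := by positivity
        linarith
    have h2 : ∑ j ∈ S, ((1+ε)*phat1 j + ε/(Γ:ℝ))
        = (1+ε) * ∑ j ∈ S, phat1 j + (S.card : ℝ) * (ε/(Γ:ℝ)) := by
      rw [Finset.sum_add_distrib, Finset.mul_sum]
      simp [mul_comm]
    have h3 : (S.card : ℝ) * (ε/(Γ:ℝ)) ≤ ε := by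
      have hcard : (S.card : ℝ) ≤ (Γ:ℝ) := by exact_mod_cast hS'.2
      calc (S.card : ℝ) * (ε/(Γ:ℝ)) ≤ (Γ:ℝ) * (ε/(Γ:ℝ)) := by
            apply mul_le_mul_of_nonneg_right hcard; positivity
        _ = ε := by field_simp
    have h4 : ∑ j ∈ S, phat1 j ≤ devGamma phat1 Γ X :=
      Finset.le_sup' (fun S => ∑ j ∈ S, phat1 j) hS
    nlinarith [hdev0 X]
  constructor
  · intro σ
    apply Finset.sup'_le
    intro i _
    refine Finset.le_sup'_of_le _ (Finset.mem_univ i) ?_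
    exact add_le_add le_rfl (hdev_le _)
  · intro σ
    apply Finset.sup'_le
    intro i _
    have hb : ∑ j ∈ jobs σ i, pbar j + devGamma phat1 Γ (jobs σ i) ≤ makespan phat1 σ :=
      Finset.le_sup' (fun i => ∑ j ∈ jobs σ i, pbar j + devGamma phat1 Γ (jobs σ i))
        (Finset.mem_univ i)
    have hp : 0 ≤ ∑ j ∈ jobs σ i, pbar j := Finset.sum_nonneg fun j _ => hpbar j
    have := hdev_ub (jobs σ i)
    nlinarith
end

section
/- Let X be a set of jobs scheduled on a machine with threshold t (all jobs in Γ(X), the Γ jobs with largest deviations, have p̂_j ≥ t, and all others have p̂_j ≤ t), and suppose the robust load p̄(X) + p̂_Γ(X) ≤ 1. Define transformed processing times p_j = p̄_j + p̂_j − t if p̂_j ≥ t, and p_j = p̄_j if p̂_j < t. If t > 0 and |X| ≥ Γ, then ∑_{j∈X} p_j ≤ 1 − Γ·t; if t = 0 then ∑_{j∈X} p_j ≤ 1. -/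
/-- Let `X` be a set of jobs with threshold `t` (every job in the top set
`G = Γ(X)` of the `min(Γ,|X|)` largest deviations has `p̂_j ≥ t`, every other job of `X`
has `p̂_j ≤ t`) and robust load `p̄(X) + p̂_Γ(X) ≤ 1`.  With transformed processing times
`p_j = p̄_j + p̂_j − t` if `p̂_j ≥ t` and `p_j = p̄_j` otherwise: if `t > 0` and `|X| ≥ Γ`
then `∑_{j∈X} p_j ≤ 1 − Γ·t`; if `t = 0` then `∑_{j∈X} p_j ≤ 1`. -/
theorem stmt12 {J : Type*} [DecidableEq J]
    (pbar phat : J → ℝ) (hpbar : ∀ j, 0 ≤ pbar j) (hphat : ∀ j, 0 ≤ phat j)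
    (Γ : ℕ) (hΓ : 1 ≤ Γ) (X G : Finset J)
    (hGX : G ⊆ X) (hcard : G.card = min Γ X.card)
    (htop : ∀ j ∈ G, ∀ k ∈ X \ G, phat k ≤ phat j)
    (t : ℝ) (ht0 : 0 ≤ t) (htG : ∀ j ∈ G, t ≤ phat j) (htX : ∀ j ∈ X \ G, phat j ≤ t)
    (hload : ∑ j ∈ X, pbar j + ∑ j ∈ G, phat j ≤ 1) :
    (0 < t → Γ ≤ X.card →
      ∑ j ∈ X, (if t ≤ phat j then pbar j + phat j - t else pbar j) ≤ 1 - (Γ : ℝ) * t) ∧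
    (t = 0 →
      ∑ j ∈ X, (if t ≤ phat j then pbar j + phat j - t else pbar j) ≤ 1) := by
  have hsplit : ∑ j ∈ X, (if t ≤ phat j then pbar j + phat j - t else pbar j)
      = ∑ j ∈ X \ G, (if t ≤ phat j then pbar j + phat j - t else pbar j)
        + ∑ j ∈ G, (if t ≤ phat j then pbar j + phat j - t else pbar j) :=
    (Finset.sum_sdiff hGX).symm
  have hsdiff : ∑ j ∈ X \ G, (if t ≤ phat j then pbar j + phat j - t else pbar j)
      = ∑ j ∈ X \ G, pbar j := by
    refine Finset.sum_congr rfl fun j hj => ?_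
    split_ifs with h
    · have := htX j hj; have : phat j = t := le_antisymm this h; linarith
    · rfl
  have hGsum : ∑ j ∈ G, (if t ≤ phat j then pbar j + phat j - t else pbar j)
      = ∑ j ∈ G, pbar j + ∑ j ∈ G, phat j - G.card * t := by
    rw [Finset.sum_congr rfl fun j hj => if_pos (htG j hj)]
    rw [Finset.sum_sub_distrib, Finset.sum_add_distrib, Finset.sum_const, nsmul_eq_mul]
  have hXsum : ∑ j ∈ X \ G, pbar j + ∑ j ∈ G, pbar j = ∑ j ∈ X, pbar j :=
    Finset.sum_sdiff hGX
  constructor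
  · intro htpos hΓX
    have hGcard : G.card = Γ := by rw [hcard, min_eq_left hΓX]
    rw [hsplit, hsdiff, hGsum, hGcard]
    linarith
  · intro ht
    subst ht
    have hphat0 : ∀ j ∈ X \ G, phat j = 0 := fun j hj =>
      le_antisymm (htX j hj) (hphat j)
    rw [hsplit, hsdiff, hGsum]
    have hc : 0 ≤ (G.card : ℝ) * 0 := by simp
    linarith
end

section
/- Let X be a set of jobs on a machine, t ≥ 0 a threshold, and ε > 0. Define p_j = p̄_j + p̂_j − t if p̂_j ≥ t, and p_j = p̄_j if p̂_j < t, and capacity c = 1 − Γ·t + ε. If ∑_{j∈X} p_j ≤ (1+ε)·c, then the robust load p̄(X) + p̂_Γ(X) ≤ Γ·t + (1+ε)·(1 − Γ·t + ε) ≤ (1+ε)². -/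
/-- With transformed times `p_j = p̄_j + p̂_j − t` if `p̂_j ≥ t` and
`p_j = p̄_j` otherwise, and capacity `c = 1 − Γ·t + ε`: if `∑_{j∈X} p_j ≤ (1+ε)·c`, then
the robust load satisfies `p̄(X) + p̂_Γ(X) ≤ Γ·t + (1+ε)·(1 − Γ·t + ε) ≤ (1+ε)²`. -/
theorem stmt13 {J : Type*} [DecidableEq J]
    (pbar phat : J → ℝ) (hpbar : ∀ j, 0 ≤ pbar j) (hphat : ∀ j, 0 ≤ phat j)
    (Γ : ℕ) (hΓ : 1 ≤ Γ) (X : Finset J)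
    (t ε : ℝ) (ht0 : 0 ≤ t) (hε : 0 < ε) (hΓt : (Γ : ℝ) * t ≤ 1)
    (hcap : ∑ j ∈ X, (if t ≤ phat j then pbar j + phat j - t else pbar j) ≤
      (1 + ε) * (1 - (Γ : ℝ) * t + ε)) :
    ∑ j ∈ X, pbar j + devGamma phat Γ X ≤ (Γ : ℝ) * t + (1 + ε) * (1 - (Γ : ℝ) * t + ε) ∧
    (Γ : ℝ) * t + (1 + ε) * (1 - (Γ : ℝ) * t + ε) ≤ (1 + ε) ^ 2 := by
  set p : J → ℝ := fun j => if t ≤ phat j then pbar j + phat j - t else pbar j with hp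
  constructor
  · have h : devGamma phat Γ X ≤
        (Γ : ℝ) * t + (1 + ε) * (1 - (Γ : ℝ) * t + ε) - ∑ j ∈ X, pbar j := by
      apply Finset.sup'_le
      intro S hS
      simp only [Finset.mem_filter, Finset.mem_powerset] at hS
      obtain ⟨hSX, hSc⟩ := hS
      have hsplit : ∑ j ∈ X, pbar j = ∑ j ∈ X \ S, pbar j + ∑ j ∈ S, pbar j :=
        (Finset.sum_sdiff hSX).symm
      have hsplitp : ∑ j ∈ X, p j = ∑ j ∈ X \ S, p j + ∑ j ∈ S, p j :=
        (Finset.sum_sdiff hSX).symm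
      have h1 : ∑ j ∈ S, (pbar j + phat j) ≤ ∑ j ∈ S, (p j + t) := by
        apply Finset.sum_le_sum
        intro j _
        simp only [hp]
        split_ifs with h
        · linarith
        · linarith [le_of_not_ge h]
      have h2 : ∑ j ∈ X \ S, pbar j ≤ ∑ j ∈ X \ S, p j := by
        apply Finset.sum_le_sum
        intro j _
        simp only [hp]
        split_ifs with h
        · linarith
        · linarith
      have h3 : ∑ j ∈ S, (p j + t) = ∑ j ∈ S, p j + S.card * t := by
        rw [Finset.sum_add_distrib, Finset.sum_const, nsmul_eq_mul]
      have h4 : (S.card : ℝ) * t ≤ (Γ : ℝ) * t :=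
        mul_le_mul_of_nonneg_right (by exact_mod_cast hSc) ht0
      have h5 : ∑ j ∈ S, (pbar j + phat j) = ∑ j ∈ S, pbar j + ∑ j ∈ S, phat j :=
        Finset.sum_add_distrib
      linarith
    linarith
  · have hΓ0 : (0 : ℝ) ≤ (Γ : ℝ) * t := mul_nonneg (Nat.cast_nonneg _) ht0
    nlinarith
end
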